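/- arXiv:1602.04012 — 2 statements merged into one kernel-verified Lean document; each statement's English description precedes it below -/
import Mathlib

section
/- Let d ≥ 2, W divisible by 4d^3, q a divisor of d with q ≥ 2, a coprime to q, and b coprime to W with -b a d-th power of a unit mod W. Then ∑_{z ∈ [1,W], z^d ≡ -b mod W} S*_q(a,z) = 0, where S*_q(a,z) = ∑_{r mod q, gcd(z+Wr, Wq)=1} e_q(a((z+Wr)^d + b)/W). -/
open Complex Real

private lemma pow_shift_aux (z t : ℤ) : ∀ d : ℕ, (t^2 : ℤ) ∣ (z + t)^(d+1) - z^(d+1) - (d+1) * z^d * t := by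
  intro d
  induction d with
  | zero => simp
  | succ n ih =>
    obtain ⟨k, hk⟩ := ih
    refine ⟨k * z + (n+1) * z^n + t * k, ?_⟩
    push_cast at hk ⊢
    linear_combination (z + t) * hk

private lemma pow_shift (z t : ℤ) (d : ℕ) (hd : 1 ≤ d) :
    (t^2 : ℤ) ∣ (z + t)^d - z^d - d * z^(d-1) * t := by
  obtain ⟨e, rfl⟩ : ∃ e, d = e + 1 := ⟨d - 1, (Nat.succ_pred_eq_of_pos hd).symm⟩
  simpa using pow_shift_aux z t e

private lemma exp_congr (N : ℤ) (hN : (N : ℂ) ≠ 0) (A B : ℤ) (h : N ∣ A - B) :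
    Complex.exp (2 * π * Complex.I * A / N) = Complex.exp (2 * π * Complex.I * B / N) := by
  obtain ⟨k, hk⟩ := h
  have hA : (A : ℂ) = B + N * k := by
    have : (A : ℤ) = B + N * k := by linarith
    exact_mod_cast congrArg (Int.cast : ℤ → ℂ) this
  have harg : 2 * (π : ℂ) * Complex.I * A / N = 2 * π * Complex.I * B / N + k * (2 * π * Complex.I) := by
    rw [hA]; field_simp
  rw [harg, Complex.exp_add, Complex.exp_int_mul_two_pi_mul_I, mul_one]

theorem sum_Sstar_vanishes (d W q : ℕ) (hd : 2 ≤ d) (hW : 4 * d ^ 3 ∣ W)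
    (hq : q ∣ d) (hq2 : 2 ≤ q) (a : ℤ) (ha : Int.gcd a (q : ℤ) = 1)
    (b : ℤ) (hb : Int.gcd b (W : ℤ) = 1)
    (hbpow : ∃ z : (ZMod W)ˣ, -(b : ZMod W) = (z : ZMod W) ^ d) :
    (∑ z ∈ (Finset.Icc 1 W).filter
        (fun z : ℕ => ((z : ℤ) ^ d + b) % (W : ℤ) = 0),
      ∑ r ∈ Finset.range q,
        if Int.gcd ((z : ℤ) + W * r) ((W : ℤ) * q) = 1 then
          Complex.exp (2 * π * Complex.I *
            (a * (((z : ℤ) + W * r) ^ d + b)) / ((W : ℤ) * q))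
        else 0) = 0 := by
  rcases Nat.eq_zero_or_pos W with rfl | hW0
  · simp
  have hd1 : 1 ≤ d := le_trans one_le_two hd
  have hdW : d ∣ W := dvd_trans ⟨4 * d ^ 2, by ring⟩ hW
  obtain ⟨M, hWM⟩ : ∃ M, W = d * M := hdW
  have hM4 : 4 * d ^ 2 ∣ M := by
    have h1 : d * (4 * d ^ 2) ∣ d * M := by
      rw [← hWM]; convert hW using 1; ring
    exact (mul_dvd_mul_iff_left (by positivity : d ≠ 0)).mp h1
  have hdqM : d * q ∣ M := dvd_trans (dvd_trans (mul_dvd_mul_left d hq)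
    (⟨4, by ring⟩ : d * d ∣ 4 * d ^ 2)) hM4
  have hdM : d ∣ M := dvd_trans (dvd_mul_right d q) hdqM
  have hqM : q ∣ M := dvd_trans (dvd_mul_left q d) hdqM
  have hqW : q ∣ W := hq.trans ⟨M, hWM⟩
  have hM0 : 0 < M := by
    rcases Nat.eq_zero_or_pos M with rfl | h
    · omega
    · exact h
  have hq0 : 0 < q := by omega
  have hWqZ : ((W : ℤ) * q) ≠ 0 := by positivity
  have hWqC : (((W : ℤ) * q : ℤ) : ℂ) ≠ 0 := by exact_mod_cast hWqZ
  set S := (Finset.Icc 1 W).filter (fun z : ℕ => ((z : ℤ) ^ d + b) % (W : ℤ) = 0) with hS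
  set g : ℕ → ℂ := fun z => Complex.exp (2 * π * Complex.I *
      (a * ((z : ℤ) ^ d + b)) / ((W : ℤ) * q)) with hg
  -- facts about members of S
  have hmemS : ∀ z ∈ S, z ∈ Finset.Icc 1 W ∧ (W : ℤ) ∣ (z : ℤ) ^ d + b := by
    intro z hz
    rw [hS, Finset.mem_filter] at hz
    exact ⟨hz.1, Int.dvd_of_emod_eq_zero hz.2⟩
  have hcopW : ∀ z ∈ S, IsCoprime (z : ℤ) (W : ℤ) := by
    intro z hz
    obtain ⟨-, k, hk⟩ := hmemS z hz
    have hb' : IsCoprime (-b) (W : ℤ) := (Int.isCoprime_iff_gcd_eq_one.mpr hb).neg_left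
    have : IsCoprime ((z : ℤ) ^ d) (W : ℤ) := by
      have hzd : (z : ℤ) ^ d = -b + k * W := by linarith
      rw [hzd]
      exact hb'.add_mul_right_left k
    exact (IsCoprime.pow_left_iff (by omega)).mp this
  -- Step A : collapse the inner sum
  have stepA : ∀ z ∈ S, (∑ r ∈ Finset.range q,
        if Int.gcd ((z : ℤ) + W * r) ((W : ℤ) * q) = 1 then
          Complex.exp (2 * π * Complex.I *
            (a * (((z : ℤ) + W * r) ^ d + b)) / ((W : ℤ) * q))
        else 0) = (q : ℂ) * g z := by
    intro z hz
    have hcz := hcopW z hz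
    have hrow : ∀ r ∈ Finset.range q,
        (if Int.gcd ((z : ℤ) + W * r) ((W : ℤ) * q) = 1 then
          Complex.exp (2 * π * Complex.I *
            (a * (((z : ℤ) + W * r) ^ d + b)) / ((W : ℤ) * q))
        else 0) = g z := by
      intro r _
      have hgcd : Int.gcd ((z : ℤ) + W * r) ((W : ℤ) * q) = 1 := by
        rw [← Int.isCoprime_iff_gcd_eq_one]
        have h1 : IsCoprime ((z : ℤ) + W * r) (W : ℤ) := by
          have := hcz.add_mul_right_left (r : ℤ)
          convert this using 2
          · rfl
          · ring
        exact h1.mul_right (h1.of_isCoprime_of_dvd_right (by exact_mod_cast Int.natCast_dvd_natCast.mpr hqW))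
      rw [if_pos hgcd]
      have e1 : 2 * (π:ℂ) * Complex.I * (a * (((z : ℤ) + W * r) ^ d + b)) / ((W : ℤ) * q)
          = 2 * (π:ℂ) * Complex.I * ((a * (((z : ℤ) + W * r) ^ d + b) : ℤ) : ℂ)
            / (((W : ℤ) * (q : ℤ) : ℤ) : ℂ) := by push_cast; ring
      have e2 : g z = Complex.exp (2 * (π:ℂ) * Complex.I * ((a * ((z : ℤ) ^ d + b) : ℤ) : ℂ)
            / (((W : ℤ) * (q : ℤ) : ℤ) : ℂ)) := by
        simp only [hg]
        congr 1
        push_cast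
        ring
      rw [e1, e2]
      apply exp_congr ((W : ℤ) * (q : ℤ)) hWqC
      have key : ((W : ℤ) * q) ∣ ((z : ℤ) + W * r) ^ d - (z : ℤ) ^ d := by
        obtain ⟨k, hk⟩ := pow_shift (z : ℤ) ((W : ℤ) * r) d hd1
        have h2 : ((z : ℤ) + W * r) ^ d - (z : ℤ) ^ d
            = (d : ℤ) * (z : ℤ) ^ (d - 1) * ((W : ℤ) * r) + ((W : ℤ) * r) ^ 2 * k := by
          linarith
        rw [h2]
        refine dvd_add ?_ ?_
        · obtain ⟨e, he⟩ := hq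
          refine ⟨e * (z : ℤ) ^ (d-1) * r, ?_⟩
          have : (d : ℤ) = q * e := by exact_mod_cast he
          rw [this]; ring
        · obtain ⟨e, he⟩ := hqW
          have heZ : (W : ℤ) = q * e := by exact_mod_cast he
          exact ⟨(e : ℤ) * r ^ 2 * k, by linear_combination ((W : ℤ) * r ^ 2 * k) * heZ⟩
      have : a * (((z : ℤ) + W * r) ^ d + b) - a * ((z : ℤ) ^ d + b)
          = a * ((((z : ℤ) + W * r) ^ d) - (z : ℤ) ^ d) := by ring
      rw [this]
      exact Dvd.dvd.mul_left key a
    rw [Finset.sum_congr rfl hrow, Finset.sum_const, Finset.card_range, nsmul_eq_mul]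
  rw [Finset.sum_congr rfl stepA, ← Finset.mul_sum]
  -- now show ∑ z in S, g z = 0
  suffices hsum : (∑ z ∈ S, g z) = 0 by rw [hsum, mul_zero]
  rw [← Finset.sum_fiberwise_of_maps_to (g := fun z : ℕ => z % M) (t := Finset.range M)
      (fun z _ => Finset.mem_range.mpr (Nat.mod_lt _ hM0)) g]
  apply Finset.sum_eq_zero
  intro x hx
  have hxM : x < M := Finset.mem_range.mp hx
  set T := S.filter (fun z : ℕ => z % M = x) with hT
  rcases T.eq_empty_or_nonempty with hTe | ⟨z₀, hz₀⟩
  · rw [hTe]; simp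
  -- nonempty fiber
  obtain ⟨c, hc1, hcM, hcmod⟩ : ∃ c : ℕ, 1 ≤ c ∧ c ≤ M ∧ c % M = x := by
    rcases Nat.eq_zero_or_pos x with rfl | hx0
    · exact ⟨M, hM0, le_refl M, Nat.mod_self M⟩
    · exact ⟨x, hx0, le_of_lt hxM, Nat.mod_eq_of_lt hxM⟩
  -- representation lemma
  have rep : ∀ z ∈ T, ∃ y < d, z = c + M * y := by
    intro z hz
    rw [hT, Finset.mem_filter, hS, Finset.mem_filter, Finset.mem_Icc] at hz
    obtain ⟨⟨⟨hz1, hzW⟩, -⟩, hzx⟩ := hz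
    have hdiv := Nat.div_add_mod z M
    by_cases h0 : x = 0
    · have hMz : M ∣ z := Nat.dvd_of_mod_eq_zero (by rw [hzx, h0])
      obtain ⟨u, hu⟩ := hMz
      have hu1 : 1 ≤ u := by nlinarith
      have hud : u ≤ d := by nlinarith [hWM]
      have hcMeq : c = M := by
        have := hcmod
        rcases Nat.lt_or_ge c M with h | h
        · rw [Nat.mod_eq_of_lt h] at this; omega
        · omega
      refine ⟨u - 1, by omega, ?_⟩
      rw [hcMeq, hu]
      cases' Nat.exists_eq_add_of_le hu1 with v hv
      subst hv
      have h1v : 1 + v - 1 = v := by omega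
      rw [h1v]; ring
    · refine ⟨z / M, ?_, ?_⟩
      · have : z < d * M := by
          rcases Nat.lt_or_ge z (d * M) with h | h
          · exact h
          · exfalso
            have : z = d * M := le_antisymm (hWM ▸ hzW) h
            rw [this, Nat.mul_mod_left] at hzx
            exact h0 hzx.symm
        exact Nat.div_lt_of_lt_mul (by rwa [mul_comm] at this)
      · have hcx : c = x := by
          rcases Nat.lt_or_ge c M with h | h
          · rw [Nat.mod_eq_of_lt h] at hcmod; omega
          · have : c = M := by omega
            rw [this, Nat.mod_self] at hcmod; omega
        rw [hcx, ← hzx]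
        exact (Nat.mod_add_div z M).symm
  -- key congruence : (c + M*y)^d ≡ c^d + W*c^(d-1)*y  mod W*q
  have lemL : ∀ y : ℕ, ((W : ℤ) * q) ∣ ((c : ℤ) + M * y) ^ d - (c : ℤ) ^ d
      - (W : ℤ) * (c : ℤ) ^ (d - 1) * y := by
    intro y
    obtain ⟨k, hk⟩ := pow_shift (c : ℤ) ((M : ℤ) * y) d hd1
    have hWMZ : (W : ℤ) = (d : ℤ) * M := by exact_mod_cast hWM
    obtain ⟨e, he⟩ := hdqM
    have heZ : (M : ℤ) = (d : ℤ) * q * e := by exact_mod_cast he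
    refine ⟨e * y ^ 2 * k, ?_⟩
    have h2 : ((c : ℤ) + M * y) ^ d - (c : ℤ) ^ d - (W : ℤ) * (c : ℤ) ^ (d-1) * y
        = ((M : ℤ) * y) ^ 2 * k := by rw [hWMZ]; linarith
    rw [h2, hWMZ, heZ]; ring
  have lemW : ∀ y : ℕ, (W : ℤ) ∣ ((c : ℤ) + M * y) ^ d - (c : ℤ) ^ d := by
    intro y
    obtain ⟨k, hk⟩ := lemL y
    refine ⟨q * k + (c : ℤ) ^ (d-1) * y, ?_⟩
    linarith
  -- c is a solution
  have hz₀T := hz₀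
  rw [hT, Finset.mem_filter] at hz₀T
  obtain ⟨hz₀S, hz₀x⟩ := hz₀T
  obtain ⟨y₀, hy₀d, hy₀⟩ := rep z₀ hz₀
  have hcsol : (W : ℤ) ∣ (c : ℤ) ^ d + b := by
    obtain ⟨-, hdvd⟩ := hmemS z₀ hz₀S
    have h1 := lemW y₀
    have h2 : (z₀ : ℤ) = (c : ℤ) + M * y₀ := by rw [hy₀]; push_cast; ring
    rw [h2] at hdvd
    have : (c : ℤ) ^ d + b = ((c : ℤ) + M * y₀) ^ d + b - (((c : ℤ) + M * y₀) ^ d - (c : ℤ) ^ d) := by ring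
    rw [this]
    exact dvd_sub hdvd h1
  -- coprimality of c with q
  have hcq : IsCoprime (c : ℤ) (q : ℤ) := by
    have h1 : IsCoprime (z₀ : ℤ) (q : ℤ) :=
      (hcopW z₀ hz₀S).of_isCoprime_of_dvd_right (by exact_mod_cast Int.natCast_dvd_natCast.mpr hqW)
    obtain ⟨e, he⟩ := hqM
    have heZ : (M : ℤ) = q * e := by exact_mod_cast he
    have h2 : (z₀ : ℤ) = (c : ℤ) + (e * y₀) * q := by
      rw [hy₀]; push_cast; rw [heZ]; ring
    rw [h2] at h1
    exact IsCoprime.of_add_mul_right_left h1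
  -- T equals the image
  have hTim : T = (Finset.range d).image (fun y => c + M * y) := by
    apply Finset.ext
    intro z
    constructor
    · intro hz
      obtain ⟨y, hyd, hy⟩ := rep z hz
      exact Finset.mem_image.mpr ⟨y, Finset.mem_range.mpr hyd, hy.symm⟩
    · intro hz
      obtain ⟨y, hy, rfl⟩ := Finset.mem_image.mp hz
      have hyd := Finset.mem_range.mp hy
      rw [hT, Finset.mem_filter, hS, Finset.mem_filter, Finset.mem_Icc]
      have hup : c + M * y ≤ W := by
        calc c + M * y ≤ M + M * y := by omega
        _ = M * (1 + y) := by ring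
        _ ≤ M * d := Nat.mul_le_mul_left M (by omega)
        _ = W := by rw [hWM, mul_comm]
      refine ⟨⟨⟨by omega, hup⟩, ?_⟩, ?_⟩
      · have hdvd : (W : ℤ) ∣ ((c : ℤ) + M * y) ^ d + b := by
          have h1 := lemW y
          have h2 : ((c : ℤ) + M * y) ^ d + b
              = (((c : ℤ) + M * y) ^ d - (c : ℤ) ^ d) + ((c : ℤ) ^ d + b) := by ring
          rw [h2]
          exact dvd_add h1 hcsol
        have hcast : ((c + M * y : ℕ) : ℤ) = (c : ℤ) + M * y := by push_cast; ring
        rw [hcast]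
        exact Int.emod_eq_zero_of_dvd hdvd
      · rw [Nat.add_mul_mod_self_left, hcmod]
  have hinj : ∀ y1 ∈ Finset.range d, ∀ y2 ∈ Finset.range d,
      c + M * y1 = c + M * y2 → y1 = y2 := by
    intro y1 _ y2 _ h
    have : M * y1 = M * y2 := by omega
    exact Nat.eq_of_mul_eq_mul_left hM0 this
  rw [hTim, Finset.sum_image hinj]
  have hqne : ((q : ℤ) : ℂ) ≠ 0 := by
    have : (q : ℤ) ≠ 0 := by positivity
    exact_mod_cast this
  have hWne : ((W : ℤ) : ℂ) ≠ 0 := by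
    have : (W : ℤ) ≠ 0 := by positivity
    exact_mod_cast this
  have hqC : (q : ℂ) ≠ 0 := Nat.cast_ne_zero.mpr (by omega)
  have hWC : (W : ℂ) ≠ 0 := Nat.cast_ne_zero.mpr (by omega)
  set ζ : ℂ := Complex.exp (2 * (π:ℂ) * Complex.I *
      ((a * (c : ℤ) ^ (d-1) : ℤ) : ℂ) / ((q : ℤ) : ℂ)) with hζ
  have hterm : ∀ y ∈ Finset.range d, g (c + M * y) = g c * ζ ^ y := by
    intro y _
    have hstep : Complex.exp (2 * (π:ℂ) * Complex.I *
          ((a * (((c : ℤ) + M * y) ^ d + b) : ℤ) : ℂ) / (((W : ℤ) * (q : ℤ) : ℤ) : ℂ))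
        = Complex.exp (2 * (π:ℂ) * Complex.I *
          ((a * ((c : ℤ) ^ d + b) + (a * (c : ℤ) ^ (d-1) * W) * y : ℤ) : ℂ)
          / (((W : ℤ) * (q : ℤ) : ℤ) : ℂ)) := by
      apply exp_congr _ hWqC
      obtain ⟨k, hk⟩ := lemL y
      exact ⟨a * k, by linear_combination a * hk⟩
    have e1 : g (c + M * y) = Complex.exp (2 * (π:ℂ) * Complex.I *
          ((a * (((c : ℤ) + M * y) ^ d + b) : ℤ) : ℂ) / (((W : ℤ) * (q : ℤ) : ℤ) : ℂ)) := by
      simp only [hg]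
      congr 1
      push_cast
      ring
    have e2 : Complex.exp (2 * (π:ℂ) * Complex.I *
          ((a * ((c : ℤ) ^ d + b) + (a * (c : ℤ) ^ (d-1) * W) * y : ℤ) : ℂ)
          / (((W : ℤ) * (q : ℤ) : ℤ) : ℂ)) = g c * ζ ^ y := by
      simp only [hg, hζ]
      rw [← Complex.exp_nat_mul, ← Complex.exp_add]
      congr 1
      push_cast
      field_simp
    rw [e1, hstep, e2]
  rw [Finset.sum_congr rfl hterm, ← Finset.mul_sum]
  have hζd : ζ ^ d = 1 := by
    rw [hζ, ← Complex.exp_nat_mul]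
    obtain ⟨e, he⟩ := hq
    have heZ : (d : ℤ) = q * e := by exact_mod_cast he
    have harg : (d : ℂ) * (2 * (π:ℂ) * Complex.I *
          ((a * (c : ℤ) ^ (d-1) : ℤ) : ℂ) / ((q : ℤ) : ℂ))
        = ((a * (c : ℤ) ^ (d-1) * e : ℤ) : ℂ) * (2 * π * Complex.I) := by
      have hdC : (d : ℂ) = (q : ℂ) * (e : ℂ) := by exact_mod_cast heZ
      push_cast
      field_simp
      linear_combination ((a : ℂ) * (c : ℂ) ^ (d-1)) * hdC
    rw [harg, Complex.exp_int_mul_two_pi_mul_I]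
  have hζ1 : ζ ≠ 1 := by
    intro h
    rw [hζ, Complex.exp_eq_one_iff] at h
    obtain ⟨n, hn⟩ := h
    have h2pi : (2 * (π:ℂ) * Complex.I) ≠ 0 := by
      simp [Real.pi_ne_zero, Complex.I_ne_zero, two_ne_zero]
    rw [mul_div_assoc, mul_comm (n : ℂ)] at hn
    have hdiv := mul_left_cancel₀ h2pi hn
    have hXq : ((a * (c : ℤ) ^ (d-1) : ℤ) : ℂ) = ((n * q : ℤ) : ℂ) := by
      rw [div_eq_iff hqne] at hdiv
      push_cast
      push_cast at hdiv
      linear_combination hdiv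
    have hXqZ : a * (c : ℤ) ^ (d-1) = n * q := by exact_mod_cast hXq
    have hdvd : (q : ℤ) ∣ a * (c : ℤ) ^ (d-1) := ⟨n, by linarith⟩
    have hcop : IsCoprime ((q : ℤ)) (a * (c : ℤ) ^ (d-1)) := by
      exact ((Int.isCoprime_iff_gcd_eq_one.mpr ha).symm).mul_right (hcq.symm.pow_right)
    have hunit := hcop.isUnit_of_dvd' dvd_rfl hdvd
    rw [Int.isUnit_iff] at hunit
    have : (2 : ℤ) ≤ (q : ℤ) := by exact_mod_cast hq2
    rcases hunit with h1 | h1 <;> omega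
  rw [geom_sum_eq hζ1, hζd, sub_self, zero_div, mul_zero]
end

section
/- Let μ, ψ be as follows: μ : ℤ → [0,∞) finitely supported, ψ : ℤ → ℂ with |ψ| ≤ μ, and let M = ∑_n μ(n). Let θ_1, ..., θ_R ∈ 𝕋 be points with |ψ̂(θ_r)| > δ M for each r, where δ > 0. Then δ² M R² ≤ ∑_{1 ≤ r, r' ≤ R} |μ̂(θ_r - θ_{r'})|. -/
open Complex Real

theorem bourgain_large_spectrum_inequality (S : Finset ℤ) (μ : ℤ → ℝ) (ψ : ℤ → ℂ)
    (hμ0 : ∀ n, 0 ≤ μ n) (hsupp : ∀ n ∉ S, μ n = 0) (hψ : ∀ n, ‖ψ n‖ ≤ μ n)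
    (M : ℝ) (hM : M = ∑ n ∈ S, μ n)
    (R : ℕ) (θ : Fin R → ℝ) (δ : ℝ) (hδ : 0 < δ)
    (hlarge : ∀ r : Fin R,
      δ * M < ‖∑ n ∈ S, ψ n * Complex.exp (2 * π * Complex.I * θ r * n)‖) :
    δ ^ 2 * M * (R : ℝ) ^ 2 ≤
      ∑ r : Fin R, ∑ r' : Fin R,
        ‖∑ n ∈ S, (μ n : ℂ) * Complex.exp (2 * π * Complex.I * (θ r - θ r') * n)‖ := by
  rcases Nat.eq_zero_or_pos R with hR | hR
  · subst hR; simp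
  -- notation
  set e : Fin R → ℤ → ℂ := fun r n => Complex.exp (2 * π * Complex.I * θ r * n) with he
  have henorm : ∀ r n, ‖e r n‖ = 1 := by
    intro r n
    simp only [he, Complex.norm_exp]
    norm_num [Complex.mul_re, Complex.mul_im]
  have hconj : ∀ (r r' : Fin R) (n : ℤ),
      Complex.exp (2 * π * Complex.I * (θ r - θ r') * n)
        = e r n * (starRingEnd ℂ) (e r' n) := by
    intro r r' n
    rw [he]
    simp only [← Complex.exp_conj, map_mul, Complex.conj_I, map_ofNat,
      Complex.conj_ofReal, map_intCast, ← Complex.exp_add]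
    congr 1
    push_cast
    ring
  set F : Fin R → ℂ := fun r => ∑ n ∈ S, ψ n * e r n with hF
  have hFleM : ∀ r, ‖F r‖ ≤ M := by
    intro r
    calc ‖F r‖ ≤ ∑ n ∈ S, ‖ψ n * e r n‖ := norm_sum_le _ _
      _ ≤ ∑ n ∈ S, μ n := by
          refine Finset.sum_le_sum fun n _ => ?_
          rw [norm_mul, henorm, mul_one]; exact hψ n
      _ = M := hM.symm
  have hMpos : 0 < M := by
    obtain ⟨r0⟩ : Nonempty (Fin R) := ⟨⟨0, hR⟩⟩
    have h1 := hlarge r0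
    have h2 := hFleM r0
    have h3 : (0:ℝ) ≤ ‖F r0‖ := norm_nonneg _
    nlinarith
  have hlargeF : ∀ r, δ * M < ‖F r‖ := fun r => hlarge r
  have hFne : ∀ r, F r ≠ 0 := by
    intro r
    have h := hlargeF r
    have h0 : (0:ℝ) < ‖F r‖ := lt_of_le_of_lt (mul_nonneg hδ.le hMpos.le) h
    exact norm_ne_zero_iff.1 h0.ne'
  set c : Fin R → ℂ := fun r => (starRingEnd ℂ) (F r) / (‖F r‖ : ℂ) with hc
  have hcnorm : ∀ r, ‖c r‖ = 1 := by
    intro r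
    rw [hc]
    simp only [norm_div, RCLike.norm_conj, Complex.norm_real, norm_norm]
    exact div_self (norm_ne_zero_iff.2 (hFne r))
  have hcF : ∀ r, c r * F r = (‖F r‖ : ℂ) := by
    intro r
    have hne : (‖F r‖ : ℂ) ≠ 0 := by
      exact_mod_cast (norm_ne_zero_iff.2 (hFne r))
    have hne' : ‖F r‖ ≠ 0 := norm_ne_zero_iff.2 (hFne r)
    rw [hc, div_mul_eq_mul_div, RCLike.conj_mul]
    push_cast
    rw [sq, mul_div_assoc]
    field_simp
    rfl
  set T : ℤ → ℂ := fun n => ∑ r : Fin R, c r * e r n with hT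
  set s : ℝ := ∑ r : Fin R, ‖F r‖ with hs
  -- step 1 : δ M R ≤ s
  have hstep1 : δ * M * R ≤ s := by
    rw [hs]
    calc δ * M * R = ∑ _r : Fin R, δ * M := by
          simp [mul_comm]
      _ ≤ ∑ r : Fin R, ‖F r‖ := Finset.sum_le_sum fun r _ => (hlarge r).le
  -- step 2 : s ≤ ∑ μ n ‖T n‖
  have hswap : ((s : ℝ) : ℂ) = ∑ n ∈ S, ψ n * T n := by
    rw [hs]
    push_cast
    calc (∑ r : Fin R, (‖F r‖ : ℂ)) = ∑ r : Fin R, c r * F r := by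
          simp_rw [hcF]
      _ = ∑ r : Fin R, ∑ n ∈ S, c r * (ψ n * e r n) := by
          simp_rw [hF, Finset.mul_sum]
      _ = ∑ n ∈ S, ψ n * T n := by
          rw [Finset.sum_comm]
          simp_rw [hT, Finset.mul_sum]
          congr 1; ext n; congr 1; ext r; ring
  have hstep2 : s ≤ ∑ n ∈ S, μ n * ‖T n‖ := by
    have : s = ‖((s : ℝ) : ℂ)‖ := by
      rw [Complex.norm_real,
        Real.norm_of_nonneg (Finset.sum_nonneg fun r _ => norm_nonneg (F r))]
    rw [this, hswap]
    calc ‖∑ n ∈ S, ψ n * T n‖ ≤ ∑ n ∈ S, ‖ψ n * T n‖ := norm_sum_le _ _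
      _ ≤ ∑ n ∈ S, μ n * ‖T n‖ := by
          refine Finset.sum_le_sum fun n _ => ?_
          rw [norm_mul]
          exact mul_le_mul_of_nonneg_right (hψ n) (norm_nonneg _)
  -- step 3 : Cauchy-Schwarz
  set B : ℝ := ∑ n ∈ S, μ n * ‖T n‖ ^ 2 with hB
  have hstep3 : (∑ n ∈ S, μ n * ‖T n‖) ^ 2 ≤ M * B := by
    have := Finset.sum_mul_sq_le_sq_mul_sq S (fun n => Real.sqrt (μ n))
      (fun n => Real.sqrt (μ n) * ‖T n‖)
    have h1 : ∀ n, Real.sqrt (μ n) * (Real.sqrt (μ n) * ‖T n‖) = μ n * ‖T n‖ := by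
      intro n
      rw [← mul_assoc, Real.mul_self_sqrt (hμ0 n)]
    have h2 : ∀ n, Real.sqrt (μ n) ^ 2 = μ n := fun n => Real.sq_sqrt (hμ0 n)
    have h3 : ∀ n, (Real.sqrt (μ n) * ‖T n‖) ^ 2 = μ n * ‖T n‖ ^ 2 := by
      intro n; rw [mul_pow, h2]
    simp_rw [h1, h2, h3] at this
    rw [hB, hM]
    exact this
  -- step 4 : B ≤ double sum
  set Dsum : ℝ := ∑ r : Fin R, ∑ r' : Fin R,
      ‖∑ n ∈ S, (μ n : ℂ) * Complex.exp (2 * π * Complex.I * (θ r - θ r') * n)‖ with hDsum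
  have hstep4 : B ≤ Dsum := by
    have hBnn : 0 ≤ B := Finset.sum_nonneg fun n _ => mul_nonneg (hμ0 n) (sq_nonneg _)
    have hBC : ((B : ℝ) : ℂ) = ∑ r : Fin R, ∑ r' : Fin R,
        c r * (starRingEnd ℂ) (c r')
          * ∑ n ∈ S, (μ n : ℂ) * Complex.exp (2 * π * Complex.I * (θ r - θ r') * n) := by
      have key : ∀ r r' : Fin R, (c r * (starRingEnd ℂ) (c r')
          * ∑ n ∈ S, (μ n : ℂ) * Complex.exp (2 * π * Complex.I * (θ r - θ r') * n))
          = ∑ n ∈ S, (μ n : ℂ) * ((c r * e r n) * (starRingEnd ℂ) (c r' * e r' n)) := by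
        intro r r'
        rw [Finset.mul_sum]
        refine Finset.sum_congr rfl fun n _ => ?_
        rw [hconj r r' n, map_mul]
        ring
      simp_rw [key]
      rw [show (∑ r : Fin R, ∑ r' : Fin R, ∑ n ∈ S,
            (μ n : ℂ) * ((c r * e r n) * (starRingEnd ℂ) (c r' * e r' n)))
          = ∑ n ∈ S, ∑ r : Fin R, ∑ r' : Fin R,
            (μ n : ℂ) * ((c r * e r n) * (starRingEnd ℂ) (c r' * e r' n)) from
        (Finset.sum_congr rfl fun r _ => Finset.sum_comm).trans Finset.sum_comm]
      rw [hB]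
      push_cast
      refine Finset.sum_congr rfl fun n _ => ?_
      have h1 : ((‖T n‖ : ℂ)) ^ 2 = T n * (starRingEnd ℂ) (T n) := by
        rw [RCLike.mul_conj]
        norm_cast
      have expand : T n * (starRingEnd ℂ) (T n)
          = ∑ r : Fin R, ∑ r' : Fin R, (c r * e r n) * (starRingEnd ℂ) (c r' * e r' n) := by
        simp only [hT]
        rw [map_sum, Finset.sum_mul_sum]
      rw [h1, expand, Finset.mul_sum]
      refine Finset.sum_congr rfl fun r _ => ?_
      rw [Finset.mul_sum]
    calc B = ‖((B : ℝ) : ℂ)‖ := by rw [Complex.norm_real, Real.norm_of_nonneg hBnn]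
      _ = ‖∑ r : Fin R, ∑ r' : Fin R, c r * (starRingEnd ℂ) (c r')
          * ∑ n ∈ S, (μ n : ℂ) * Complex.exp (2 * π * Complex.I * (θ r - θ r') * n)‖ := by
            rw [hBC]
      _ ≤ ∑ r : Fin R, ‖∑ r' : Fin R, c r * (starRingEnd ℂ) (c r')
          * ∑ n ∈ S, (μ n : ℂ) * Complex.exp (2 * π * Complex.I * (θ r - θ r') * n)‖ :=
            norm_sum_le _ _
      _ ≤ ∑ r : Fin R, ∑ r' : Fin R, ‖c r * (starRingEnd ℂ) (c r')
          * ∑ n ∈ S, (μ n : ℂ) * Complex.exp (2 * π * Complex.I * (θ r - θ r') * n)‖ :=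
            Finset.sum_le_sum fun r _ => norm_sum_le _ _
      _ ≤ Dsum := by
            rw [hDsum]
            refine Finset.sum_le_sum fun r _ => Finset.sum_le_sum fun r' _ => ?_
            rw [norm_mul, norm_mul, hcnorm, RCLike.norm_conj, hcnorm, one_mul, one_mul]
  have h0 : 0 ≤ δ * M * (R : ℝ) := by positivity
  have h1 : (δ * M * (R : ℝ)) ^ 2 ≤ (∑ n ∈ S, μ n * ‖T n‖) ^ 2 := by
    have hs2 : δ * M * (R : ℝ) ≤ ∑ n ∈ S, μ n * ‖T n‖ := le_trans hstep1 hstep2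
    nlinarith
  have h2 : (δ * M * (R : ℝ)) ^ 2 ≤ M * Dsum := by nlinarith
  nlinarith [h2, hMpos, sq_nonneg (δ * M * (R : ℝ))]
end
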